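/- Under the list-experiment model with misreporting (Assumptions 1 and 2), if there is no misreporting in the treatment group (p₁ = 0), then the bias of the mean-difference estimator is (E(Y₁) − E(Y₀)) − δ = (p₀/(1−p₀))·(E(Y₀) − J/2), where E(Y₀) = ∑_{j=0}^{J} j·P₀(j) and E(Y₁) = ∑_{j=0}^{J+1} j·P₁(j). In particular, the mean difference equals δ if and only if p₀ = 0 or E(Y₀) = J/2. -/

import Mathlib

lemma icc_int_succ_top {a b : ℤ} (h : a ≤ b + 1) (f : ℤ → ℝ) :
    ∑ j ∈ Finset.Icc a (b+1), f j = (∑ j ∈ Finset.Icc a b, f j) + f (b+1) := by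
  have : Finset.Icc a (b+1) = insert (b+1) (Finset.Icc a b) := by
    ext x; simp only [Finset.mem_Icc, Finset.mem_insert]; omega
  rw [this, Finset.sum_insert (by simp)]
  ring

lemma icc_int_shift (N : ℤ) (f : ℤ → ℝ) :
    ∑ j ∈ Finset.Icc (0:ℤ) (N+1), f j = ∑ k ∈ Finset.Icc (-1:ℤ) N, f (1+k) := by
  rw [show Finset.Icc (0:ℤ) (N+1) = Finset.map (addLeftEmbedding 1) (Finset.Icc (-1) N) by
    rw [Finset.map_add_left_Icc]; congr 1; ring]
  rw [Finset.sum_map]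
  simp [addLeftEmbedding]

lemma gauss_int : ∀ n : ℕ, ∑ j ∈ Finset.Icc (0:ℤ) (n:ℤ), (j:ℝ) = n*(n+1)/2 := by
  intro n
  induction n with
  | zero => simp
  | succ k ih =>
    push_cast
    rw [icc_int_succ_top (by positivity)]
    rw [ih]; push_cast; ring

/-- If there is no misreporting in the treatment group (`p₁ = 0`), the bias of the
mean-difference estimator is `(E(Y₁) − E(Y₀)) − δ = (p₀/(1−p₀))·(E(Y₀) − J/2)`;
in particular, the mean difference equals `δ` iff `p₀ = 0` or `E(Y₀) = J/2`. -/
theorem list_experiment_mean_difference_bias_no_treatment_misreporting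
    (J : ℕ) (hJ : 1 ≤ J)
    (P : ℤ → ℝ)
    (hPzero : ∀ j : ℤ, j < 0 ∨ (J : ℤ) < j → P j = 0)
    (hPnonneg : ∀ j : ℤ, 0 ≤ P j)
    (hPsum : ∑ j ∈ Finset.Icc (0 : ℤ) (J : ℤ), P j = 1)
    (δ p₀ p₁ : ℝ)
    (hδ : 0 ≤ δ ∧ δ ≤ 1) (hp₀ : 0 ≤ p₀ ∧ p₀ < 1) (hp₁ : 0 ≤ p₁ ∧ p₁ < 1)
    (hp₁zero : p₁ = 0)
    (P₀ P₁ : ℤ → ℝ)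
    (hP₀ : ∀ j : ℤ, 0 ≤ j → j ≤ (J : ℤ) →
      P₀ j = (1 - p₀) * P j + p₀ / ((J : ℝ) + 1))
    (hP₁ : ∀ j : ℤ, 0 ≤ j → j ≤ (J : ℤ) + 1 →
      P₁ j = (1 - p₁) * (δ * P (j - 1) + (1 - δ) * P j) + p₁ / ((J : ℝ) + 2)) :
    ((∑ j ∈ Finset.Icc (0 : ℤ) ((J : ℤ) + 1), (j : ℝ) * P₁ j) -
          (∑ j ∈ Finset.Icc (0 : ℤ) (J : ℤ), (j : ℝ) * P₀ j) - δ =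
        p₀ / (1 - p₀) *
          ((∑ j ∈ Finset.Icc (0 : ℤ) (J : ℤ), (j : ℝ) * P₀ j) - (J : ℝ) / 2)) ∧
      ((∑ j ∈ Finset.Icc (0 : ℤ) ((J : ℤ) + 1), (j : ℝ) * P₁ j) -
            (∑ j ∈ Finset.Icc (0 : ℤ) (J : ℤ), (j : ℝ) * P₀ j) = δ ↔
        p₀ = 0 ∨ (∑ j ∈ Finset.Icc (0 : ℤ) (J : ℤ), (j : ℝ) * P₀ j) = (J : ℝ) / 2) := by
  have h1p : (1 : ℝ) - p₀ ≠ 0 := by linarith [hp₀.2]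
  have hJ1 : ((J : ℝ) + 1) ≠ 0 := by positivity
  set μ : ℝ := ∑ j ∈ Finset.Icc (0 : ℤ) (J : ℤ), (j : ℝ) * P j with hμ
  -- E(Y₀)
  have hS0 : (∑ j ∈ Finset.Icc (0 : ℤ) (J : ℤ), (j : ℝ) * P₀ j)
      = (1 - p₀) * μ + p₀ * (J : ℝ) / 2 := by
    have : (∑ j ∈ Finset.Icc (0 : ℤ) (J : ℤ), (j : ℝ) * P₀ j)
        = ∑ j ∈ Finset.Icc (0 : ℤ) (J : ℤ),
            ((1 - p₀) * ((j : ℝ) * P j) + (p₀ / ((J : ℝ) + 1)) * (j : ℝ)) := by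
      refine Finset.sum_congr rfl fun j hj => ?_
      rw [Finset.mem_Icc] at hj
      rw [hP₀ j hj.1 hj.2]; ring
    rw [this, Finset.sum_add_distrib, ← Finset.mul_sum, ← Finset.mul_sum, ← hμ,
      gauss_int J]
    field_simp
  -- E(Y₁)
  have hS1 : (∑ j ∈ Finset.Icc (0 : ℤ) ((J : ℤ) + 1), (j : ℝ) * P₁ j) = μ + δ := by
    have heq : (∑ j ∈ Finset.Icc (0 : ℤ) ((J : ℤ) + 1), (j : ℝ) * P₁ j)
        = ∑ j ∈ Finset.Icc (0 : ℤ) ((J : ℤ) + 1),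
            (δ * ((j : ℝ) * P (j - 1)) + (1 - δ) * ((j : ℝ) * P j)) := by
      refine Finset.sum_congr rfl fun j hj => ?_
      rw [Finset.mem_Icc] at hj
      rw [hP₁ j hj.1 hj.2, hp₁zero]; ring
    have hU : (∑ j ∈ Finset.Icc (0 : ℤ) ((J : ℤ) + 1), (j : ℝ) * P j) = μ := by
      rw [icc_int_succ_top (by positivity), hPzero ((J:ℤ)+1) (Or.inr (by omega))]
      simp [hμ]
    have hT : (∑ j ∈ Finset.Icc (0 : ℤ) ((J : ℤ) + 1), (j : ℝ) * P (j - 1)) = μ + 1 := by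
      rw [icc_int_shift]
      have : ∑ k ∈ Finset.Icc (-1 : ℤ) (J : ℤ), ((1 + k : ℤ) : ℝ) * P (1 + k - 1)
          = ∑ k ∈ Finset.Icc (-1 : ℤ) (J : ℤ), ((k : ℝ) * P k + P k) := by
        refine Finset.sum_congr rfl fun k _ => ?_
        have : (1 : ℤ) + k - 1 = k := by ring
        rw [this]; push_cast; ring
      rw [this, Finset.sum_add_distrib]
      have hins : Finset.Icc (-1 : ℤ) (J : ℤ) = insert (-1) (Finset.Icc 0 (J : ℤ)) := by
        ext x; simp only [Finset.mem_Icc, Finset.mem_insert]; omega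
      have hPneg : P (-1) = 0 := hPzero (-1) (Or.inl (by omega))
      rw [hins, Finset.sum_insert (by simp), Finset.sum_insert (by simp), hPneg, hPsum, ← hμ]
      push_cast
      ring
    rw [heq, Finset.sum_add_distrib, ← Finset.mul_sum, ← Finset.mul_sum, hU, hT]
    ring
  rw [hS0, hS1]
  constructor
  · field_simp
    ring
  · constructor
    · intro h
      by_cases hp : p₀ = 0
      · exact Or.inl hp
      · right
        have : p₀ * (μ - (J : ℝ) / 2) = 0 := by linarith
        have hμJ : μ = (J : ℝ) / 2 := by
          rcases mul_eq_zero.mp this with h' | h'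
          · exact absurd h' hp
          · linarith
        rw [hμJ]; ring
    · rintro (h | h)
      · rw [h]; ring
      · have hμJ : μ = (J : ℝ) / 2 := by
          have : (1 - p₀) * (μ - (J : ℝ) / 2) = 0 := by linarith
          rcases mul_eq_zero.mp this with h' | h'
          · exact absurd h' h1p
          · linarith
        rw [hμJ]; ring
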